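/- (Twisted line scattering degeneracy.) For λ > 0 and γ ≥ 0 consider the N = 3 JNR data with equal unit weights and poles a₀ = λ(1,1,γ), a₁ = λ(1,−1,−γ), a₂ = λ(−1,1,−γ), a₃ = λ(−1,−1,γ), and let f(x) = Σᵢ₌₀³ log‖x − aᵢ‖. Then the origin is a critical point of f, the Hessian of f at the origin equals (4/(λ²(2+γ²)²))·diag(γ², γ², 2 − γ²), and this Hessian is degenerate (has zero determinant) if and only if γ = 0 or γ = √2. -/

import Mathlib

/-- The point `(p, q, r)` of `ℝ³` as an element of `EuclideanSpace ℝ (Fin 3)`. -/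
noncomputable def pt (p q r : ℝ) : EuclideanSpace ℝ (Fin 3) :=
  (WithLp.equiv 2 (Fin 3 → ℝ)).symm ![p, q, r]

/-- The twisted-line-scattering `N = 3` JNR poles `λ(±1, ±1, ±γ)`. -/
noncomputable def tlsPoles (lam γ : ℝ) : Fin 4 → EuclideanSpace ℝ (Fin 3) :=
  ![lam • pt 1 1 γ, lam • pt 1 (-1) (-γ), lam • pt (-1) 1 (-γ), lam • pt (-1) (-1) γ]

/-- The potential `f(x) = Σᵢ log‖x − aᵢ‖` for the twisted-line-scattering poles (equal
unit weights). -/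
noncomputable def tlsF (lam γ : ℝ) (x : EuclideanSpace ℝ (Fin 3)) : ℝ :=
  ∑ i, Real.log ‖x - tlsPoles lam γ i‖

section aux
variable {E : Type*} [NormedAddCommGroup E] [InnerProductSpace ℝ E] [CompleteSpace E]

lemma hasGradientAt_log_norm (a x : E) (hx : x ≠ a) :
    HasGradientAt (fun y : E => Real.log ‖y - a‖) ((‖x - a‖ ^ 2)⁻¹ • (x - a)) x := by
  have hQ : (‖x - a‖ ^ 2 : ℝ) ≠ 0 :=
    pow_ne_zero 2 (norm_ne_zero_iff.mpr (sub_ne_zero.mpr hx))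
  have hsq : HasFDerivAt (fun y : E => ‖y - a‖ ^ 2)
      (2 • (innerSL ℝ (x - a)).comp (ContinuousLinearMap.id ℝ E)) x :=
    ((hasFDerivAt_id x).sub_const a).norm_sq
  have hlog := (hsq.log hQ).const_mul (2⁻¹ : ℝ)
  have hfun : (fun y : E => 2⁻¹ * Real.log (‖y - a‖ ^ 2)) = fun y : E => Real.log ‖y - a‖ := by
    funext y
    rw [Real.log_pow]
    push_cast
    ring
  rw [hfun] at hlog
  rw [hasGradientAt_iff_hasFDerivAt]
  refine hlog.congr_fderiv ?_
  ext v
  simp [InnerProductSpace.toDual_apply_apply, real_inner_smul_left, ContinuousLinearMap.smul_apply]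
  ring

omit [CompleteSpace E] in
lemma hasFDerivAt_term (a x : E) (hx : x ≠ a) :
    HasFDerivAt (fun y : E => (‖y - a‖ ^ 2)⁻¹ • (y - a))
      ((‖x - a‖ ^ 2)⁻¹ • (ContinuousLinearMap.id ℝ E) +
        ((-((‖x - a‖ ^ 2) ^ 2)⁻¹) • (2 • (innerSL ℝ (x - a)).comp
          (ContinuousLinearMap.id ℝ E))).smulRight (x - a)) x := by
  have hQ : (‖x - a‖ ^ 2 : ℝ) ≠ 0 :=
    pow_ne_zero 2 (norm_ne_zero_iff.mpr (sub_ne_zero.mpr hx))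
  have hsq : HasFDerivAt (fun y : E => ‖y - a‖ ^ 2)
      (2 • (innerSL ℝ (x - a)).comp (ContinuousLinearMap.id ℝ E)) x :=
    ((hasFDerivAt_id x).sub_const a).norm_sq
  have hinv := (hasDerivAt_inv hQ).comp_hasFDerivAt x hsq
  have hid : HasFDerivAt (fun y : E => y - a) (ContinuousLinearMap.id ℝ E) x :=
    (hasFDerivAt_id x).sub_const a
  convert hinv.smul hid using 2 <;> rfl

end aux

section compute
variable (lam γ : ℝ)

abbrev E3 := EuclideanSpace ℝ (Fin 3)

noncomputable def tlsZeta (x : E3) : E3 :=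
  ∑ i, (‖x - tlsPoles lam γ i‖ ^ 2)⁻¹ • (x - tlsPoles lam γ i)

lemma normsq (x : E3) : ‖x‖ ^ 2 = x 0 ^ 2 + x 1 ^ 2 + x 2 ^ 2 := by
  rw [EuclideanSpace.norm_eq, Real.sq_sqrt (by positivity)]
  simp [Fin.sum_univ_three, sq_abs]

lemma poles_normsq (j : Fin 4) :
    ‖(0 : E3) - tlsPoles lam γ j‖ ^ 2 = lam ^ 2 * (2 + γ ^ 2) := by
  fin_cases j <;>
    · rw [normsq]; simp [tlsPoles, pt]; ring

lemma zeta_zero : tlsZeta lam γ 0 = 0 := by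
  unfold tlsZeta
  ext i
  rw [Fin.sum_univ_four]
  simp only [poles_normsq]
  simp [tlsPoles, pt]
  fin_cases i <;> simp

noncomputable def tlsHess : E3 →L[ℝ] E3 :=
  ∑ j, ((‖(0 : E3) - tlsPoles lam γ j‖ ^ 2)⁻¹ • (ContinuousLinearMap.id ℝ E3) +
        ((-((‖(0 : E3) - tlsPoles lam γ j‖ ^ 2) ^ 2)⁻¹) •
            (2 • (innerSL ℝ ((0 : E3) - tlsPoles lam γ j)).comp
              (ContinuousLinearMap.id ℝ E3))).smulRight ((0 : E3) - tlsPoles lam γ j))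

lemma hess_apply (hlam : lam ≠ 0) (v : E3) (i : Fin 3) :
    tlsHess lam γ v i = 4 / (lam ^ 2 * (2 + γ ^ 2) ^ 2) * (![γ ^ 2, γ ^ 2, 2 - γ ^ 2] i) * v i := by
  have h2γ : (2 + γ ^ 2 : ℝ) ≠ 0 := by positivity
  unfold tlsHess
  rw [ContinuousLinearMap.sum_apply, Fin.sum_univ_four]
  simp only [poles_normsq, ContinuousLinearMap.add_apply, ContinuousLinearMap.smul_apply,
    ContinuousLinearMap.smulRight_apply, ContinuousLinearMap.coe_smul', Pi.smul_apply,
    ContinuousLinearMap.coe_comp', Function.comp_apply, ContinuousLinearMap.coe_id', id_eq,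
    innerSL_apply_apply, PiLp.inner_apply, RCLike.inner_apply, conj_trivial, Fin.sum_univ_three]
  simp [tlsPoles, pt, PiLp.add_apply, PiLp.smul_apply, PiLp.sub_apply]
  fin_cases i <;> · simp; field_simp; ring

end compute


/-- (Twisted line scattering degeneracy.) For `λ > 0` and `γ ≥ 0`,
with poles `a₀ = λ(1,1,γ)`, `a₁ = λ(1,−1,−γ)`, `a₂ = λ(−1,1,−γ)`, `a₃ = λ(−1,−1,γ)` and
`f(x) = Σᵢ log‖x − aᵢ‖`: the origin is a critical point of `f`, the Hessian of `f` at
the origin (the derivative of `∇f` at `0`) equals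
`(4/(λ²(2+γ²)²))·diag(γ², γ², 2 − γ²)`, and this Hessian is degenerate (zero
determinant) iff `γ = 0` or `γ = √2`. -/
theorem jnr_twisted_line_scattering_hessian (lam γ : ℝ) (hlam : 0 < lam) (hγ : 0 ≤ γ) :
    gradient (tlsF lam γ) 0 = 0
      ∧ (∀ v : EuclideanSpace ℝ (Fin 3), ∀ i : Fin 3,
          fderiv ℝ (fun y => gradient (tlsF lam γ) y) 0 v i
            = 4 / (lam ^ 2 * (2 + γ ^ 2) ^ 2) * (![γ ^ 2, γ ^ 2, 2 - γ ^ 2] i) * v i)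
      ∧ (LinearMap.det
            ((fderiv ℝ (fun y => gradient (tlsF lam γ) y) 0 :
                EuclideanSpace ℝ (Fin 3) →L[ℝ] EuclideanSpace ℝ (Fin 3)) :
              EuclideanSpace ℝ (Fin 3) →ₗ[ℝ] EuclideanSpace ℝ (Fin 3)) = 0
          ↔ γ = 0 ∨ γ = Real.sqrt 2) := by
  have h2γ : (0:ℝ) < 2 + γ ^ 2 := by positivity
  have h0 : ∀ j, (0 : E3) ≠ tlsPoles lam γ j := by
    intro j h
    have h1 := poles_normsq lam γ j
    rw [← h] at h1
    simp only [sub_zero, norm_zero] at h1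
    have := mul_pos (pow_pos hlam 2) h2γ
    norm_num at h1
    rcases h1 with h1 | h1
    · exact hlam.ne' h1
    · linarith
  have hgradeq : ∀ y : E3, (∀ j, y ≠ tlsPoles lam γ j) →
      HasGradientAt (tlsF lam γ) (tlsZeta lam γ y) y := by
    intro y hy
    rw [hasGradientAt_iff_hasFDerivAt]
    have hs := HasFDerivAt.sum (fun j (_ : j ∈ Finset.univ) =>
      ((hasGradientAt_log_norm (tlsPoles lam γ j) y (hy j)).hasFDerivAt))
    unfold tlsF tlsZeta
    rw [map_sum]
    exact hs
  have hζT : HasFDerivAt (tlsZeta lam γ) (tlsHess lam γ) 0 := by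
    unfold tlsZeta tlsHess
    exact HasFDerivAt.fun_sum (fun j _ => hasFDerivAt_term _ 0 (h0 j))
  have hev : ∀ᶠ y in nhds (0 : E3), ∀ j, y ≠ tlsPoles lam γ j :=
    Filter.eventually_all.mpr fun j => eventually_ne_nhds (h0 j)
  have hgradf : HasFDerivAt (fun y => gradient (tlsF lam γ) y) (tlsHess lam γ) 0 :=
    hζT.congr_of_eventuallyEq (hev.mono fun y hy => (hgradeq y hy).gradient)
  have hfd : fderiv ℝ (fun y => gradient (tlsF lam γ) y) 0 = tlsHess lam γ := hgradf.fderiv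
  refine ⟨((hgradeq 0 h0).gradient).trans (zeta_zero lam γ), ?_, ?_⟩
  · intro v i
    rw [hfd]
    exact hess_apply lam γ hlam.ne' v i
  · rw [hfd]
    set c : Fin 3 → ℝ := fun i => 4 / (lam ^ 2 * (2 + γ ^ 2) ^ 2) * ![γ ^ 2, γ ^ 2, 2 - γ ^ 2] i
      with hc
    set b := (EuclideanSpace.basisFun (Fin 3) ℝ).toBasis with hb
    have hM : LinearMap.toMatrix b b (tlsHess lam γ : E3 →ₗ[ℝ] E3) = Matrix.diagonal c := by
      ext i j
      rw [LinearMap.toMatrix_apply, hb, OrthonormalBasis.coe_toBasis_repr_apply]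
      rw [EuclideanSpace.basisFun_repr]
      have : ((tlsHess lam γ : E3 →ₗ[ℝ] E3) (b j)) i = tlsHess lam γ (b j) i := rfl
      rw [this, hess_apply lam γ hlam.ne']
      rw [hb, OrthonormalBasis.coe_toBasis, EuclideanSpace.basisFun_apply,
        EuclideanSpace.single_apply]
      rw [Matrix.diagonal_apply]
      by_cases hij : i = j <;> simp [hij, hc]
    have hdet : LinearMap.det (tlsHess lam γ : E3 →ₗ[ℝ] E3) = c 0 * c 1 * c 2 := by
      rw [← LinearMap.det_toMatrix b, hM, Matrix.det_diagonal, Fin.prod_univ_three]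
    rw [hdet]
    have hk : (4 / (lam ^ 2 * (2 + γ ^ 2) ^ 2) : ℝ) ≠ 0 := by positivity
    simp only [hc, Matrix.cons_val_zero, Matrix.cons_val_one, Matrix.head_cons,
      Matrix.cons_val_two, Matrix.tail_cons]
    constructor
    · intro h
      have h' : γ ^ 2 = 0 ∨ 2 - γ ^ 2 = 0 := by
        rcases mul_eq_zero.mp h with h | h
        · rcases mul_eq_zero.mp h with h | h <;>
            rcases mul_eq_zero.mp h with h | h <;> tauto
        · rcases mul_eq_zero.mp h with h | h <;> tauto
      rcases h' with h' | h'
      · exact Or.inl (by nlinarith : γ = 0)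
      · right
        have : γ ^ 2 = 2 := by linarith
        rw [← Real.sqrt_sq hγ, this]
    · rintro (rfl | rfl)
      · norm_num
      · rw [Real.sq_sqrt (by norm_num : (2:ℝ) ≥ 0)]
        ring
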